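/- Let p be an odd prime, ζ_p = e^{2πi/p} and ζ_{p²} = e^{2πi/p²}. Let χ be a Dirichlet character modulo p² with values in ℂ such that χ^p is the trivial character, χ is nontrivial, and χ(1 − p) = ζ_p. For a Dirichlet character ψ modulo p², let τ(ψ) = ∑_{x mod p²} ψ(x)·ζ_{p²}^x denote its Gauss sum. Then for all integers k, l with k ≢ 0, l ≢ 0 and k + l ≢ 0 (mod p), one has τ(χ^k)·τ(χ^l)/τ(χ^{k+l}) = p·ζ_p^{−(k+l)·γ̃}, where γ̃ ∈ {0,...,p−1} is the representative of γ_p(k·(k+l)^{-1}) ∈ 𝔽_p. -/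

import Mathlib

def mirimanoff (p : ℕ) (t : ZMod p) : ZMod p :=
  ∑ j ∈ Finset.Icc 1 (p - 1), (j : ZMod p)⁻¹ * t ^ j

/-- The Gauss sum τ(ψ) = ∑_{x mod p²} ψ(x)·ζ_{p²}^x of a Dirichlet character ψ mod p². -/
noncomputable def gaussSumMod (p : ℕ) (ψ : DirichletCharacter ℂ (p ^ 2)) : ℂ :=
  ∑ x ∈ Finset.range (p ^ 2),
    ψ (x : ZMod (p ^ 2)) * Complex.exp (2 * Real.pi * Complex.I * x / (p ^ 2))

open Finset

lemma zpow_congr_of_primitive {p : ℕ} {ζ : ℂ} (hz : ζ ≠ 0)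
    (hζ : IsPrimitiveRoot ζ p) {a b : ℤ} (h : (a : ZMod p) = b) : ζ ^ a = ζ ^ b := by
  have h1 : ζ ^ (a - b) = 1 := by
    rw [hζ.zpow_eq_one_iff_dvd]
    rwa [← ZMod.intCast_zmod_eq_zero_iff_dvd, Int.cast_sub, sub_eq_zero]
  calc ζ ^ a = ζ ^ (a - b) * ζ ^ b := by rw [← zpow_add₀ hz, sub_add_cancel]
  _ = ζ ^ b := by rw [h1, one_mul]

lemma binom_aux (p : ℕ) (hp : p.Prime) (a b : ℤ) :
    (a + b) ^ p - a ^ p - b ^ p =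
      (p : ℤ) * ∑ j ∈ Finset.Ico 1 p, ((p.choose j / p : ℕ) : ℤ) * a ^ j * b ^ (p - j) := by
  have hpow := add_pow a b p
  rw [Finset.sum_range_succ] at hpow
  rw [Finset.range_eq_Ico, Finset.sum_eq_sum_Ico_succ_bot hp.pos] at hpow
  simp only [pow_zero, Nat.sub_zero, Nat.choose_zero_right, Nat.cast_one, one_mul, mul_one,
    Nat.sub_self, Nat.choose_self] at hpow
  have : ∑ j ∈ Finset.Ico 1 p, a ^ j * b ^ (p - j) * (p.choose j : ℤ) =
      (p : ℤ) * ∑ j ∈ Finset.Ico 1 p, ((p.choose j / p : ℕ) : ℤ) * a ^ j * b ^ (p - j) := by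
    rw [Finset.mul_sum]
    refine Finset.sum_congr rfl fun j hj => ?_
    rw [Finset.mem_Ico] at hj
    have hdvd : p ∣ p.choose j := hp.dvd_choose_self (by omega) hj.2
    have : (p.choose j : ℤ) = (p : ℤ) * ((p.choose j / p : ℕ) : ℤ) := by
      rw [← Nat.cast_mul, Nat.mul_div_cancel' hdvd]
    rw [this]; ring
  rw [this] at hpow
  linarith [hpow]

lemma choose_sub_one_cast (p : ℕ) (hp : p.Prime) :
    ∀ i, i < p → (((p-1).choose i : ℕ) : ZMod p) = (-1 : ZMod p) ^ i := by
  intro i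
  induction i with
  | zero => simp
  | succ i ih =>
    intro hi
    have hpas : p.choose (i+1) = (p-1).choose i + (p-1).choose (i+1) := by
      have h := Nat.choose_succ_succ (p-1) i
      have hp1 : (p-1).succ = p := Nat.succ_pred_eq_of_pos hp.pos
      rw [hp1] at h
      simpa using h
    have h0 : ((p.choose (i+1) : ℕ) : ZMod p) = 0 := by
      rw [ZMod.natCast_eq_zero_iff]
      exact hp.dvd_choose_self (by omega) hi
    have := ih (by omega)
    rw [hpas, Nat.cast_add, this] at h0
    rw [pow_succ]
    linear_combination h0
lemma choose_div_cast (p : ℕ) (hp : p.Prime) (j : ℕ) (hj1 : 1 ≤ j) (hj2 : j < p) :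
    (j : ZMod p) * ((p.choose j / p : ℕ) : ZMod p) = (-1 : ZMod p) ^ (j - 1) := by
  have key : (p-1).choose (j-1) = (p.choose j / p) * j := by
    have h := Nat.add_one_mul_choose_eq (p-1) (j-1)
    have hp1 : p-1+1 = p := Nat.succ_pred_eq_of_pos hp.pos
    have hj1' : j-1+1 = j := Nat.succ_pred_eq_of_pos hj1
    rw [hp1, hj1'] at h
    have hdvd : p ∣ p.choose j := hp.dvd_choose_self (by omega) hj2
    have hc : p.choose j = p * (p.choose j / p) := (Nat.mul_div_cancel' hdvd).symm
    rw [hc] at h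
    have := Nat.eq_of_mul_eq_mul_left hp.pos (by linarith [h] : p * ((p-1).choose (j-1)) = p * ((p.choose j / p) * j))
    exact this
  have := choose_sub_one_cast p hp (j-1) (by omega)
  rw [key] at this
  rw [← this, Nat.cast_mul]
  ring
lemma one_sub_p_pow (p : ℕ) (c : ℕ) :
    ((1 : ZMod (p ^ 2)) - (p : ZMod (p ^ 2))) ^ c = 1 - (c : ZMod (p ^ 2)) * p := by
  have hpp : (p : ZMod (p ^ 2)) * p = 0 := by
    have h : ((p * p : ℕ) : ZMod (p ^ 2)) = 0 := by
      rw [← pow_two, ZMod.natCast_self]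
    push_cast at h
    exact h
  induction c with
  | zero => simp
  | succ c ih =>
    have hstep : ((1 : ZMod (p ^ 2)) - (p : ZMod (p ^ 2))) ^ (c+1)
        = ((1 : ZMod (p ^ 2)) - (p : ZMod (p ^ 2))) ^ c * ((1 : ZMod (p ^ 2)) - (p : ZMod (p ^ 2))) :=
      pow_succ _ _
    rw [hstep, ih]
    push_cast
    have : ((c : ZMod (p^2)) * p) * p = 0 := by rw [mul_assoc, hpp, mul_zero]
    linear_combination this

lemma chi_one_sub (p : ℕ) (hp : p.Prime) (χ : DirichletCharacter ℂ (p ^ 2))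
    (hnorm : χ ((1 : ZMod (p ^ 2)) - (p : ZMod (p ^ 2))) =
      Complex.exp (2 * Real.pi * Complex.I / p)) (c : ℤ) :
    χ (1 - (c : ZMod (p ^ 2)) * p) = Complex.exp (2 * Real.pi * Complex.I / p) ^ c := by
  set ζ := Complex.exp (2 * Real.pi * Complex.I / p) with hζdef
  have hz : ζ ≠ 0 := Complex.exp_ne_zero _
  have hprim : IsPrimitiveRoot ζ p := Complex.isPrimitiveRoot_exp p hp.pos.ne'
  have hnat : ∀ c' : ℕ, χ (1 - (c' : ZMod (p ^ 2)) * p) = ζ ^ c' := by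
    intro c'
    rw [← one_sub_p_pow p, map_pow, hnorm]
  set c' := (c % ((p^2 : ℕ) : ℤ)).toNat with hc'def
  have hc' : (c' : ℤ) = c % ((p^2 : ℕ) : ℤ) :=
    Int.toNat_of_nonneg (Int.emod_nonneg _ (by exact_mod_cast pow_ne_zero 2 (by exact_mod_cast hp.pos.ne' : (p:ℤ) ≠ 0)))
  have hcast : ((c' : ℕ) : ZMod (p ^ 2)) = (c : ZMod (p ^ 2)) := by
    have h : ((c' : ℤ) : ZMod (p ^ 2)) = ((c : ℤ) : ZMod (p ^ 2)) := by
      rw [ZMod.intCast_eq_intCast_iff, hc']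
      exact Int.emod_emod_of_dvd c dvd_rfl
    push_cast at h
    exact h
  rw [← hcast, hnat c']
  have hzz : ζ ^ (c' : ℤ) = ζ ^ c := by
    apply zpow_congr_of_primitive hz hprim
    rw [ZMod.intCast_eq_intCast_iff, hc']
    exact Int.emod_emod_of_dvd c (by push_cast; exact Dvd.intro p (by ring))
  rw [← hzz, zpow_natCast]

lemma chi_val (p : ℕ) (hp : p.Prime) (χ : DirichletCharacter ℂ (p ^ 2))
    (hχp : χ ^ p = 1)
    (hnorm : χ ((1 : ZMod (p ^ 2)) - (p : ZMod (p ^ 2))) =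
      Complex.exp (2 * Real.pi * Complex.I / p))
    (a : ℕ) (ha : ¬ p ∣ a) (q : ℤ) (hq : (a : ℤ) ^ (p - 1) = 1 + p * q) :
    χ (a : ZMod (p ^ 2)) = Complex.exp (2 * Real.pi * Complex.I / p) ^ q := by
  set ζ := Complex.exp (2 * Real.pi * Complex.I / p) with hζdef
  have hz : ζ ≠ 0 := Complex.exp_ne_zero _
  have hunit : IsUnit ((a : ℕ) : ZMod (p ^ 2)) := by
    rw [ZMod.isUnit_iff_coprime]
    exact Nat.Coprime.pow_right 2 ((Nat.coprime_comm.mp (hp.coprime_iff_not_dvd.mpr ha)))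
  have hq2 : ((a : ZMod (p^2))) ^ (p - 1) = 1 + (q : ZMod (p^2)) * p := by
    have h := congrArg (fun z : ℤ => (z : ZMod (p^2))) hq
    push_cast at h
    rw [h]; ring
  have h1 : (a : ZMod (p ^ 2)) ^ p = (a : ZMod (p ^ 2)) * (1 + (q : ZMod (p^2)) * p) := by
    have hpp : p - 1 + 1 = p := by have := hp.pos; omega
    have hstep : (a : ZMod (p ^ 2)) ^ (p - 1 + 1) = (a : ZMod (p^2)) ^ (p-1) * a := pow_succ _ _
    rw [hpp] at hstep
    rw [hstep, hq2]
    ring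
  have h2 : (χ ((a : ℕ) : ZMod (p ^ 2))) ^ p =
      χ ((a : ℕ) : ZMod (p ^ 2)) * ζ ^ (-q) := by
    rw [← map_pow, h1, map_mul]
    congr 1
    have harg : (1 : ZMod (p^2)) + (q : ZMod (p^2)) * p = 1 - ((-q : ℤ) : ZMod (p^2)) * p := by
      push_cast; ring
    rw [harg]
    exact chi_one_sub p hp χ hnorm (-q)
  have h3 : (χ ((a : ℕ) : ZMod (p ^ 2))) ^ p = 1 := by
    rw [← MulChar.pow_apply' χ hp.pos.ne', hχp, MulChar.one_apply hunit]
  rw [h3] at h2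
  have h4 : χ ((a : ℕ) : ZMod (p ^ 2)) * (ζ ^ (-q) * ζ ^ q) = ζ ^ q := by
    linear_combination ζ ^ q * h2.symm
  rwa [← zpow_add₀ hz, neg_add_cancel, zpow_zero, mul_one] at h4
lemma tau_eval (p : ℕ) (hp : p.Prime) (χ : DirichletCharacter ℂ (p ^ 2))
    (hχp : χ ^ p = 1)
    (hnorm : χ ((1 : ZMod (p ^ 2)) - (p : ZMod (p ^ 2))) =
      Complex.exp (2 * Real.pi * Complex.I / p))
    (k : ℤ) (hk : ¬ (p : ℤ) ∣ k) (q : ℤ)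
    (hq : (((k % p).toNat : ℕ) : ℤ) ^ (p - 1) = 1 + p * q) :
    gaussSumMod p (χ ^ k) =
      (p : ℂ) * Complex.exp (2 * Real.pi * Complex.I / p) ^ ((k % p) * q) *
        Complex.exp (2 * Real.pi * Complex.I / (p^2 : ℕ)) ^ ((k % p).toNat : ℕ) := by
  have hppos : 0 < p := hp.pos
  haveI : NeZero p := ⟨hp.pos.ne'⟩
  haveI : Fact p.Prime := ⟨hp⟩
  have hpne : (p : ℤ) ≠ 0 := by exact_mod_cast hppos.ne'
  set ζ : ℂ := Complex.exp (2 * Real.pi * Complex.I / p) with hζdef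
  set ζ2 : ℂ := Complex.exp (2 * Real.pi * Complex.I / (p^2 : ℕ)) with hζ2def
  have hz : ζ ≠ 0 := Complex.exp_ne_zero _
  have hz2 : ζ2 ≠ 0 := Complex.exp_ne_zero _
  have hprim : IsPrimitiveRoot ζ p := Complex.isPrimitiveRoot_exp p hppos.ne'
  have hzp : ζ ^ p = 1 := hprim.pow_eq_one
  have hzz : ζ2 ^ p = ζ := by
    rw [hζ2def, ← Complex.exp_nat_mul, hζdef]
    congr 1
    have : ((p:ℂ)) ≠ 0 := by exact_mod_cast hppos.ne'
    push_cast
    field_simp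
  set k' := (k % p).toNat with hk'def
  have hk's : (k' : ℤ) = k % p := Int.toNat_of_nonneg (Int.emod_nonneg k hpne)
  have hk2 : k' < p := by
    have := Int.emod_lt_of_pos k (by exact_mod_cast hppos : (0:ℤ) < p)
    omega
  have hk1 : 1 ≤ k' := by
    rcases Nat.eq_zero_or_pos k' with h0 | h1
    · exfalso
      apply hk
      rw [Int.dvd_iff_emod_eq_zero, ← hk's, h0]
      rfl
    · exact h1
  have hk'ne : k' ≠ 0 := by omega
  -- reduce χ ^ k to a natural power
  have hred : χ ^ k = χ ^ (k' : ℕ) := by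
    conv_lhs => rw [show k = (p : ℤ) * (k / p) + k % p from (Int.mul_ediv_add_emod k p).symm]
    rw [zpow_add, zpow_mul, zpow_natCast, hχp, one_zpow, one_mul, ← hk's, zpow_natCast]
  rw [hred]
  unfold gaussSumMod
  -- rewrite exponential as power of ζ2
  have hexp : ∀ x : ℕ, Complex.exp (2 * Real.pi * Complex.I * x / ((p:ℂ)^2)) = ζ2 ^ x := by
    intro x
    rw [hζ2def, ← Complex.exp_nat_mul]
    congr 1
    have hne : ((p:ℂ)) ≠ 0 := by exact_mod_cast hppos.ne'
    push_cast
    field_simp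
  have hstep1 : ∑ x ∈ Finset.range (p ^ 2),
      (χ ^ (k' : ℕ)) (x : ZMod (p ^ 2)) * Complex.exp (2 * Real.pi * Complex.I * x / ((p:ℂ)^2))
      = ∑ x ∈ Finset.range (p ^ 2), (χ ^ (k' : ℕ)) (x : ZMod (p ^ 2)) * ζ2 ^ x := by
    refine Finset.sum_congr rfl fun x _ => ?_
    rw [hexp x]
  rw [hstep1]
  haveI : NeZero (p ^ 2) := ⟨pow_ne_zero 2 hppos.ne'⟩
  have hreindex : ∑ x ∈ Finset.range (p ^ 2), (χ ^ (k' : ℕ)) (x : ZMod (p ^ 2)) * ζ2 ^ x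
      = ∑ rs ∈ Finset.range p ×ˢ Finset.range p,
          (χ ^ (k' : ℕ)) (((rs.1 + p * rs.2 : ℕ)) : ZMod (p ^ 2)) * ζ2 ^ (rs.1 + p * rs.2) := by
    refine Finset.sum_nbij' (i := fun x => (x % p, x / p)) (j := fun rs => rs.1 + p * rs.2)
      ?_ ?_ ?_ ?_ ?_
    · intro x hx
      rw [Finset.mem_range] at hx
      rw [Finset.mem_product, Finset.mem_range, Finset.mem_range]
      refine ⟨Nat.mod_lt _ hppos, ?_⟩
      rw [Nat.div_lt_iff_lt_mul hppos]
      rwa [← pow_two]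
    · intro rs hrs
      rw [Finset.mem_product, Finset.mem_range, Finset.mem_range] at hrs
      rw [Finset.mem_range]
      calc rs.1 + p * rs.2 < p + p * rs.2 := by omega
        _ = p * (rs.2 + 1) := by ring
        _ ≤ p * p := Nat.mul_le_mul_left _ (by omega)
        _ = p ^ 2 := (pow_two p).symm
    · intro x _
      exact Nat.mod_add_div x p
    · intro rs hrs
      rw [Finset.mem_product, Finset.mem_range, Finset.mem_range] at hrs
      have h1 : (rs.1 + p * rs.2) % p = rs.1 := by
        rw [Nat.add_mul_mod_self_left]
        exact Nat.mod_eq_of_lt hrs.1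
      have h2 : (rs.1 + p * rs.2) / p = rs.2 := by
        rw [Nat.add_mul_div_left _ _ hppos, Nat.div_eq_of_lt hrs.1, zero_add]
      exact Prod.ext h1 h2
    · intro x _
      rw [Nat.mod_add_div]
  rw [hreindex, Finset.sum_product]
  -- key evaluation of inner sums
  have key : ∀ b : ℕ, 1 ≤ b → b < p → ∀ qb : ℤ, ((b:ℤ)) ^ (p-1) = 1 + p * qb →
      ∃ w : ZMod p, ((b : ZMod p) * w = 1) ∧
        ∑ s ∈ Finset.range p, (χ ^ (k' : ℕ)) (((b + p * s : ℕ)) : ZMod (p ^ 2)) * ζ2 ^ (b + p * s)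
          = ζ ^ ((k' : ℤ) * qb) * ζ2 ^ b *
              ∑ s ∈ Finset.range p, (ζ ^ (1 - (k' : ℤ) * ((w.val : ℕ) : ℤ))) ^ s := by
    intro b hb1 hb2 qb hqb
    have hbd : ¬ p ∣ b := by
      intro hd
      exact absurd (Nat.le_of_dvd (by omega) hd) (by omega)
    have hbunit : IsUnit ((b : ℕ) : ZMod (p^2)) := by
      rw [ZMod.isUnit_iff_coprime]
      exact Nat.Coprime.pow_right 2 (Nat.coprime_comm.mp (hp.coprime_iff_not_dvd.mpr hbd))
    obtain ⟨w2, hw2⟩ := hbunit.exists_right_inv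
    set w : ZMod p := ((w2.val : ℕ) : ZMod p) with hwdef
    have hww : (b : ZMod p) * w = 1 := by
      have h := congrArg (ZMod.castHom (dvd_pow_self p two_ne_zero) (ZMod p)) hw2
      rw [map_mul, map_one, map_natCast] at h
      rwa [hwdef, ZMod.natCast_val, ← ZMod.castHom_apply (h := dvd_pow_self p two_ne_zero)]
    refine ⟨w, hww, ?_⟩
    rw [Finset.mul_sum]
    refine Finset.sum_congr rfl fun s hs => ?_
    set c : ℤ := -(s * (w2.val : ℤ)) with hcdef
    have hX : (((b + p * s : ℕ)) : ZMod (p ^ 2)) =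
        (b : ZMod (p ^ 2)) * (1 - (c : ZMod (p ^ 2)) * p) := by
      have hc2 : ((c : ℤ) : ZMod (p^2)) = -((s : ZMod (p^2)) * w2) := by
        rw [hcdef]
        push_cast
        rw [ZMod.natCast_val, ZMod.cast_id]
      rw [hc2]
      push_cast
      linear_combination (-((p : ZMod (p^2)) * (s : ZMod (p^2)))) * hw2
    rw [MulChar.pow_apply' χ hk'ne, hX, map_mul,
      chi_val p hp χ hχp hnorm b hbd qb hqb, chi_one_sub p hp χ hnorm c]
    rw [pow_add, pow_mul, hzz]
    -- now pure ζ-power manipulation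
    rw [mul_pow]
    rw [← zpow_natCast (ζ ^ qb) k', ← zpow_natCast (ζ ^ c) k', ← zpow_mul, ← zpow_mul]
    rw [← zpow_natCast ζ s, ← zpow_natCast (ζ ^ (1 - (k' : ℤ) * ((w.val : ℕ) : ℤ))) s, ← zpow_mul]
    have hcollect : ζ ^ (qb * (k':ℤ)) * ζ ^ (c * (k':ℤ)) * (ζ2 ^ b * ζ ^ (s:ℤ))
        = ζ2 ^ b * ζ ^ (qb * (k':ℤ) + c * (k':ℤ) + (s:ℤ)) := by
      rw [zpow_add₀ hz, zpow_add₀ hz]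
      ring
    rw [hcollect]
    have hcollect2 : ζ ^ ((k':ℤ) * qb) * ζ2 ^ b * ζ ^ ((1 - (k' : ℤ) * ((w.val : ℕ) : ℤ)) * (s:ℤ))
        = ζ2 ^ b * ζ ^ ((k':ℤ) * qb + (1 - (k' : ℤ) * ((w.val : ℕ) : ℤ)) * (s:ℤ)) := by
      rw [zpow_add₀ hz]
      ring
    rw [hcollect2]
    congr 1
    apply zpow_congr_of_primitive hz hprim
    have hw2c : (ZMod.cast w2 : ZMod p) = w := (ZMod.natCast_val w2).symm
    push_cast [hcdef]
    simp only [ZMod.natCast_val, ZMod.cast_id]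
    rw [hw2c]
    ring
  have hzero : ∀ b ∈ Finset.range p, b ≠ k' →
      (∑ s ∈ Finset.range p, (χ ^ (k':ℕ)) (((b + p * s : ℕ)) : ZMod (p^2)) * ζ2 ^ (b + p * s)) = 0 := by
    intro b hb hbne
    rcases Nat.eq_zero_or_pos b with rfl | hb1
    · refine Finset.sum_eq_zero fun s hs => ?_
      have hnu : ¬ IsUnit (((0 + p * s : ℕ)) : ZMod (p^2)) := by
        rw [ZMod.isUnit_iff_coprime]
        intro hco
        have h1 : p ∣ Nat.gcd (0 + p * s) (p^2) :=
          Nat.dvd_gcd ⟨s, by ring⟩ (dvd_pow_self p two_ne_zero)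
        rw [Nat.Coprime] at hco
        rw [hco] at h1
        have h2 := Nat.le_of_dvd one_pos h1
        have := hp.two_le
        omega
      rw [MulChar.pow_apply' χ hk'ne, MulChar.map_nonunit _ hnu, zero_pow hk'ne, zero_mul]
    · have hb2 : b < p := Finset.mem_range.mp hb
      obtain ⟨qb, hqb⟩ : ∃ qb : ℤ, ((b:ℤ)) ^ (p-1) = 1 + p * qb := by
        have hbz : ((b : ℕ) : ZMod p) ≠ 0 := by
          rw [Ne, ZMod.natCast_eq_zero_iff]
          intro hd
          exact absurd (Nat.le_of_dvd (by omega) hd) (by omega)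
        haveI : Fact p.Prime := ⟨hp⟩
        have hfer : ((b : ℕ) : ZMod p) ^ (p - 1) = 1 := ZMod.pow_card_sub_one_eq_one hbz
        have hdv : (p : ℤ) ∣ (b:ℤ)^(p-1) - 1 := by
          rw [← ZMod.intCast_zmod_eq_zero_iff_dvd]
          push_cast
          rw [hfer]
          ring
        obtain ⟨qb, hqb⟩ := hdv
        exact ⟨qb, by linarith⟩
      obtain ⟨w, hww, hsum⟩ := key b hb1 hb2 qb hqb
      rw [hsum]
      have hEne : ζ ^ (1 - (k':ℤ) * ((w.val : ℕ) : ℤ)) ≠ 1 := by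
        intro h1
        have hdvd := (hprim.zpow_eq_one_iff_dvd _).mp h1
        rw [← ZMod.intCast_zmod_eq_zero_iff_dvd] at hdvd
        push_cast at hdvd
        simp only [ZMod.natCast_val, ZMod.cast_id] at hdvd
        have hwne : w ≠ 0 := by
          intro h0
          rw [h0, mul_zero] at hww
          exact one_ne_zero hww.symm
        have h3 : ((k':ℕ) : ZMod p) * w = 1 := by linear_combination -hdvd
        have h4 : ((k':ℕ) : ZMod p) * w = ((b:ℕ) : ZMod p) * w := by rw [h3, hww]
        have h5 := mul_right_cancel₀ hwne h4
        rw [ZMod.natCast_eq_natCast_iff] at h5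
        have h6 : k' % p = b % p := h5
        rw [Nat.mod_eq_of_lt hk2, Nat.mod_eq_of_lt hb2] at h6
        exact hbne h6.symm
      rw [geom_sum_eq hEne]
      have hEp : (ζ ^ (1 - (k':ℤ) * ((w.val : ℕ) : ℤ))) ^ p = 1 := by
        rw [← zpow_natCast (ζ ^ (1 - (k':ℤ) * ((w.val : ℕ) : ℤ))) p, ← zpow_mul, mul_comm,
          zpow_mul, zpow_natCast, hzp, one_zpow]
      rw [hEp, sub_self, zero_div, mul_zero]
  rw [Finset.sum_eq_single_of_mem k' (Finset.mem_range.mpr hk2) hzero]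
  obtain ⟨w, hww, hsum⟩ := key k' hk1 hk2 q hq
  rw [hsum]
  have hE1 : ζ ^ (1 - (k':ℤ) * ((w.val : ℕ) : ℤ)) = 1 := by
    apply (hprim.zpow_eq_one_iff_dvd _).mpr
    rw [← ZMod.intCast_zmod_eq_zero_iff_dvd]
    push_cast
    simp only [ZMod.natCast_val, ZMod.cast_id]
    linear_combination -hww
  rw [hE1]
  simp only [one_pow, Finset.sum_const, Finset.card_range, nsmul_eq_mul, mul_one]
  rw [hk's]
  ring
lemma step_b (p : ℕ) (hp : p.Prime) (hodd : Odd p) (k l : ℤ)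
    (hk : ¬ (p : ℤ) ∣ k) (hl : ¬ (p : ℤ) ∣ l) (hkl : ¬ (p : ℤ) ∣ (k + l))
    (qk ql qm d : ℤ)
    (hqk : (k % p) ^ (p - 1) = 1 + p * qk)
    (hql : (l % p) ^ (p - 1) = 1 + p * ql)
    (hqm : ((k + l) % p) ^ (p - 1) = 1 + p * qm)
    (hd : ((k % p) + (l % p) - ((k + l) % p) : ℤ) = p * d) :
    (((k % p) * qk + (l % p) * ql - ((k + l) % p) * qm + d : ℤ) : ZMod p)
      = -((k : ZMod p) + (l : ZMod p)) *
          (mirimanoff p ((k : ZMod p) * ((k : ZMod p) + (l : ZMod p))⁻¹)) := by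
  haveI : Fact p.Prime := ⟨hp⟩
  haveI : NeZero p := ⟨hp.pos.ne'⟩
  have hppos := hp.pos
  have hpne : (p : ℤ) ≠ 0 := by exact_mod_cast hp.pos.ne'
  set K : ℤ := k % p with hK
  set L : ℤ := l % p with hL
  set M : ℤ := (k + l) % p with hM
  set F := ZMod p
  set a : F := (k : F) with ha
  set b : F := (l : F) with hb
  have hKa : ((K : ℤ) : F) = a := by rw [hK, ha, ZMod.intCast_mod]
  have hLb : ((L : ℤ) : F) = b := by rw [hL, hb, ZMod.intCast_mod]
  have hMm : ((M : ℤ) : F) = a + b := by rw [hM, ZMod.intCast_mod]; push_cast; rw [ha, hb]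
  set m : F := a + b with hm
  have hmne : m ≠ 0 := by
    rw [hm, ha, hb]
    intro h0
    apply hkl
    rw [← ZMod.intCast_zmod_eq_zero_iff_dvd]
    push_cast
    exact h0
  set t : F := a * m⁻¹ with ht
  set γ : F := mirimanoff p t with hγ
  -- part 1 : integer manipulation
  set S : ℤ := ∑ j ∈ Finset.Ico 1 p, ((p.choose j / p : ℕ) : ℤ) * K ^ j * L ^ (p - j) with hS
  have h1 : (K + L) ^ p - K ^ p - L ^ p = p * S := binom_aux p hp K L
  have h2 : ((p : ℤ)) ^ 2 ∣ (K + L) ^ p - M ^ p := by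
    have hdvd : (p : ℤ) ∣ (K + L) - M := ⟨d, by linarith⟩
    have := dvd_sub_pow_of_dvd_sub hdvd 1
    rwa [pow_one] at this
  obtain ⟨e, he⟩ := h2
  have hpow : ∀ x q' : ℤ, x ^ (p - 1) = 1 + p * q' → x ^ p = x + p * (x * q') := by
    intro x q' hq'
    have hpp : p - 1 + 1 = p := by omega
    have hstep : x ^ (p - 1 + 1) = x ^ (p - 1) * x := pow_succ _ _
    rw [hpp] at hstep
    rw [hstep, hq']
    ring
  have hKp := hpow K qk hqk
  have hLp := hpow L ql hql
  have hMp := hpow M qm hqm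
  have hE1 : K * qk + L * ql - M * qm + d = -S + p * e := by
    have hcancel : (p : ℤ) * (K * qk + L * ql - M * qm + d) = (p : ℤ) * (-S + p * e) := by
      have : (K + L) ^ p = M ^ p + p ^ 2 * e := by linarith
      nlinarith [h1, hKp, hLp, hMp, hd, this]
    exact mul_left_cancel₀ hpne hcancel
  -- part 2 : computation in F
  set T : ℤ := ((t.val : ℕ) : ℤ) with hT
  have hTt : ((T : ℤ) : F) = t := by
    rw [hT]
    push_cast
    rw [ZMod.natCast_val, ZMod.cast_id]
  set S1 : ℤ := ∑ j ∈ Finset.Ico 1 p, ((p.choose j / p : ℕ) : ℤ) * T ^ j * (1 - T) ^ (p - j)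
    with hS1
  set S2 : ℤ := ∑ j ∈ Finset.Ico 1 p, ((p.choose j / p : ℕ) : ℤ) * (-T) ^ j * (1 : ℤ) ^ (p - j)
    with hS2
  have h3 : 1 - T ^ p - (1 - T) ^ p = p * S1 := by
    have := binom_aux p hp T (1 - T)
    rw [show T + (1 - T) = 1 by ring, one_pow] at this
    exact this
  have h4 : (1 - T) ^ p + T ^ p - 1 = p * S2 := by
    have := binom_aux p hp (-T) 1
    rw [show (-T) + 1 = 1 - T by ring, one_pow, Odd.neg_pow hodd] at this
    linarith
  have h5 : S1 = -S2 := by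
    have hcancel : (p : ℤ) * S1 = (p : ℤ) * (-S2) := by linarith
    exact mul_left_cancel₀ hpne hcancel
  have hIco : Finset.Icc 1 (p - 1) = Finset.Ico 1 p := by
    rw [← Finset.Ico_add_one_right_eq_Icc]
    congr 1
    omega
  -- termwise facts
  have hterm : ∀ j ∈ Finset.Ico 1 p,
      ((p.choose j / p : ℕ) : F) = (j : F)⁻¹ * (-1 : F) ^ (j - 1) := by
    intro j hj
    rw [Finset.mem_Ico] at hj
    have hjne : (j : F) ≠ 0 := by
      rw [Ne, ZMod.natCast_eq_zero_iff]
      intro hdj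
      exact absurd (Nat.le_of_dvd (by omega) hdj) (by omega)
    have hcj := choose_div_cast p hp j hj.1 hj.2
    rw [← hcj, ← mul_assoc, inv_mul_cancel₀ hjne, one_mul]
  have hsign : ∀ j : ℕ, 1 ≤ j → (-1 : F) ^ (j - 1) * (-1 : F) ^ j = -1 := by
    intro j hj
    have h7 : (-1 : F) ^ j = (-1 : F) ^ (j - 1) * (-1) := by
      conv_lhs => rw [show j = (j - 1) + 1 by omega]
      rw [pow_succ]
    rw [h7, ← mul_assoc, ← pow_add]
    have h8 : (-1 : F) ^ ((j-1) + (j-1)) = 1 := by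
      rw [show (j-1)+(j-1) = 2*(j-1) by ring, pow_mul]
      norm_num
    rw [h8, one_mul]
  -- S2 mod p is -γ
  have hS2bar : ((S2 : ℤ) : F) = -γ := by
    rw [hS2, hγ, mirimanoff, hIco, Int.cast_sum]
    simp only [Int.cast_mul, Int.cast_pow, Int.cast_natCast, Int.cast_neg, Int.cast_one,
      Int.cast_sub]
    rw [← Finset.sum_neg_distrib]
    refine Finset.sum_congr rfl fun j hj => ?_
    have hj' := Finset.mem_Ico.mp hj
    rw [hterm j hj, hTt, one_pow, neg_pow]
    have := hsign j hj'.1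
    linear_combination ((j : F)⁻¹ * t ^ j) * this
  -- S mod p is m * γ
  have hSbar : ((S : ℤ) : F) = m * γ := by
    rw [hS, Int.cast_sum]
    simp only [Int.cast_mul, Int.cast_pow, Int.cast_natCast, Int.cast_neg, Int.cast_one,
      Int.cast_sub]
    have hta : t * m = a := by
      rw [ht, mul_assoc, inv_mul_cancel₀ hmne, mul_one]
    have htb : (1 - t) * m = b := by
      have : (1 - t) * m = m - t * m := by ring
      rw [this, hta, hm]
      ring
    have hstep : ∀ j ∈ Finset.Ico 1 p,
        ((p.choose j / p : ℕ) : F) * ((K : ℤ) : F) ^ j * ((L : ℤ) : F) ^ (p - j)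
          = (((p.choose j / p : ℕ) : F) * t ^ j * (1 - t) ^ (p - j)) * m ^ p := by
      intro j hj
      have hj' := Finset.mem_Ico.mp hj
      have hmp : m ^ j * m ^ (p - j) = m ^ p := by
        rw [← pow_add]
        congr 1
        omega
      have hA : a ^ j = t ^ j * m ^ j := by rw [← mul_pow, hta]
      have hB : b ^ (p - j) = (1 - t) ^ (p - j) * m ^ (p - j) := by rw [← mul_pow, htb]
      rw [hKa, hLb, hA, hB, ← hmp]
      ring
    rw [Finset.sum_congr rfl hstep, ← Finset.sum_mul]
    
    have hS1bar : ((S1 : ℤ) : F) = ∑ j ∈ Finset.Ico 1 p,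
        ((p.choose j / p : ℕ) : F) * t ^ j * (1 - t) ^ (p - j) := by
      rw [hS1, Int.cast_sum]
      simp only [Int.cast_mul, Int.cast_pow, Int.cast_natCast, Int.cast_neg, Int.cast_one,
        Int.cast_sub]
      refine Finset.sum_congr rfl fun j hj => ?_
      rw [hTt]
    have hγ1 : ((S1 : ℤ) : F) = γ := by
      rw [h5]
      push_cast [-Int.natCast_div]
      rw [hS2bar]
      ring
    rw [← hS1bar, hγ1, ZMod.pow_card]
    ring
  -- conclude
  have hcast := congrArg (fun z : ℤ => (z : F)) hE1
  push_cast at hcast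
  rw [hSbar] at hcast
  rw [ZMod.natCast_self] at hcast
  push_cast
  linear_combination hcast
theorem gaussSum_factor_system (p : ℕ) (hp : p.Prime) (hodd : Odd p)
    (χ : DirichletCharacter ℂ (p ^ 2))
    (hχp : χ ^ p = 1) (hχ : χ ≠ 1)
    (hnorm : χ ((1 : ZMod (p ^ 2)) - (p : ZMod (p ^ 2))) =
      Complex.exp (2 * Real.pi * Complex.I / p))
    (k l : ℤ) (hk : ¬ (p : ℤ) ∣ k) (hl : ¬ (p : ℤ) ∣ l) (hkl : ¬ (p : ℤ) ∣ (k + l)) :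
    gaussSumMod p (χ ^ k) * gaussSumMod p (χ ^ l) / gaussSumMod p (χ ^ (k + l)) =
      (p : ℂ) * Complex.exp (2 * Real.pi * Complex.I / p) ^
        (-(k + l) * ((mirimanoff p ((k : ZMod p) * ((k : ZMod p) + (l : ZMod p))⁻¹)).val : ℤ)) := by
  haveI : Fact p.Prime := ⟨hp⟩
  haveI : NeZero p := ⟨hp.pos.ne'⟩
  have hppos := hp.pos
  have hpne : (p : ℤ) ≠ 0 := by exact_mod_cast hp.pos.ne'
  have hpnec : (p : ℂ) ≠ 0 := by exact_mod_cast hp.pos.ne'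
  -- Fermat quotient witnesses
  have fermat : ∀ j : ℤ, ¬ (p : ℤ) ∣ j → ∃ q : ℤ, (j % p) ^ (p - 1) = 1 + p * q := by
    intro j hj
    have hz0 : ((j % p : ℤ) : ZMod p) ≠ 0 := by
      rw [ZMod.intCast_mod, Ne, ZMod.intCast_zmod_eq_zero_iff_dvd]
      exact hj
    have hfer : ((j % p : ℤ) : ZMod p) ^ (p - 1) = 1 := ZMod.pow_card_sub_one_eq_one hz0
    have hfer' : ((j : ℤ) : ZMod p) ^ (p - 1) = 1 := by rwa [ZMod.intCast_mod] at hfer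
    have hdv : (p : ℤ) ∣ (j % p) ^ (p - 1) - 1 := by
      rw [← ZMod.intCast_zmod_eq_zero_iff_dvd]
      push_cast
      rw [hfer']
      ring
    obtain ⟨q, hq⟩ := hdv
    exact ⟨q, by linarith⟩
  obtain ⟨qk, hqk⟩ := fermat k hk
  obtain ⟨ql, hql⟩ := fermat l hl
  obtain ⟨qm, hqm⟩ := fermat (k + l) hkl
  obtain ⟨d, hd⟩ : ∃ d : ℤ, ((k % p) + (l % p) - ((k + l) % p) : ℤ) = p * d := by
    have h0 : (((k % p) + (l % p) - ((k + l) % p) : ℤ) : ZMod p) = 0 := by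
      push_cast [ZMod.intCast_mod]
      ring
    rw [ZMod.intCast_zmod_eq_zero_iff_dvd] at h0
    exact h0
  have htonat : ∀ j : ℤ, ((j % p).toNat : ℤ) = j % p := fun j =>
    Int.toNat_of_nonneg (Int.emod_nonneg j hpne)
  have hqk' : (((k % p).toNat : ℕ) : ℤ) ^ (p - 1) = 1 + p * qk := by rw [htonat]; exact hqk
  have hql' : (((l % p).toNat : ℕ) : ℤ) ^ (p - 1) = 1 + p * ql := by rw [htonat]; exact hql
  have hqm' : ((((k + l) % p).toNat : ℕ) : ℤ) ^ (p - 1) = 1 + p * qm := by rw [htonat]; exact hqm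
  rw [tau_eval p hp χ hχp hnorm k hk qk hqk', tau_eval p hp χ hχp hnorm l hl ql hql',
    tau_eval p hp χ hχp hnorm (k + l) hkl qm hqm']
  have hzne : Complex.exp (2 * Real.pi * Complex.I / p) ≠ 0 := Complex.exp_ne_zero _
  have hz2ne : Complex.exp (2 * Real.pi * Complex.I / (p^2 : ℕ)) ≠ 0 := Complex.exp_ne_zero _
  rw [div_eq_iff (by
    exact mul_ne_zero (mul_ne_zero hpnec (zpow_ne_zero _ hzne)) (pow_ne_zero _ hz2ne))]
  set ζ : ℂ := Complex.exp (2 * Real.pi * Complex.I / p) with hζdef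
  set ζ2 : ℂ := Complex.exp (2 * Real.pi * Complex.I / (p^2 : ℕ)) with hζ2def
  have hprim : IsPrimitiveRoot ζ p := Complex.isPrimitiveRoot_exp p hppos.ne'
  have hzz : ζ2 ^ p = ζ := by
    rw [hζ2def, ← Complex.exp_nat_mul, hζdef]
    congr 1
    have hne : ((p:ℂ)) ≠ 0 := hpnec
    push_cast
    field_simp
  have hz2eq : ζ2 ^ ((k % p).toNat : ℕ) * ζ2 ^ ((l % p).toNat : ℕ)
      = ζ2 ^ (((k + l) % p).toNat : ℕ) * ζ ^ d := by
    rw [← zpow_natCast ζ2 ((k % p).toNat), ← zpow_natCast ζ2 ((l % p).toNat),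
      ← zpow_natCast ζ2 (((k + l) % p).toNat), ← zpow_add₀ hz2ne]
    have hexp : (((k % p).toNat : ℤ) + ((l % p).toNat : ℤ))
        = ((((k + l) % p).toNat : ℤ)) + (p : ℤ) * d := by
      rw [htonat, htonat, htonat]
      linarith
    rw [hexp, zpow_add₀ hz2ne, zpow_mul, zpow_natCast ζ2 p, hzz]
  have hzmain : ζ ^ ((k % p) * qk) * ζ ^ ((l % p) * ql) * ζ ^ d
      = ζ ^ (-(k + l) * ((mirimanoff p ((k : ZMod p) * ((k : ZMod p) + (l : ZMod p))⁻¹)).val : ℤ))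
          * ζ ^ (((k + l) % p) * qm) := by
    rw [← zpow_add₀ hzne, ← zpow_add₀ hzne, ← zpow_add₀ hzne]
    apply zpow_congr_of_primitive hzne hprim
    have hstep := step_b p hp hodd k l hk hl hkl qk ql qm d hqk hql hqm hd
    push_cast at hstep ⊢
    simp only [ZMod.natCast_val, ZMod.cast_id]
    linear_combination hstep
  linear_combination ((p:ℂ))^2 * ζ ^ ((k % p) * qk) * ζ ^ ((l % p) * ql) * hz2eq
    + ((p:ℂ))^2 * ζ2 ^ (((k + l) % p).toNat : ℕ) * hzmain
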